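/- Let T be a finite tree on n vertices with edge capacities c : E(T) → ℕ satisfying c(e) ≥ 1 for every edge e. Then there exists a bijection v : {1,…,n} → V(T) such that every edge e of T lies on at most c(e) of the unique tree paths between v(i) and v(i+1) (over i = 1,…,n−1) if and only if there exist vertices s, t ∈ V(T) such that the unique simple path from s to t in T contains every edge e with c(e) = 1. (This is the characterization underlying the polynomial-time algorithm for cVNE of a uniform linear virtual network on a tree physical network.) -/

import Mathlib

open Finset



namespace CVNE

variable {V : Type}

/-- Number of adjacent sign flips in a list under `σ`. -/
def loadB (σ : V → Bool) : List V → ℕ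
  | x :: y :: rest => (if σ x = σ y then 0 else 1) + loadB σ (y :: rest)
  | _ => 0

@[simp] lemma loadB_nil (σ : V → Bool) : loadB σ [] = 0 := rfl
@[simp] lemma loadB_single (σ : V → Bool) (x : V) : loadB σ [x] = 0 := rfl
lemma loadB_cons_cons (σ : V → Bool) (x y : V) (M : List V) :
    loadB σ (x :: y :: M) = (if σ x = σ y then 0 else 1) + loadB σ (y :: M) := rfl

lemma loadB_split (σ : V → Bool) (A : List V) (x : V) (B : List V) :
    loadB σ (A ++ x :: B) = loadB σ (A ++ [x]) + loadB σ (x :: B) := by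
  induction A with
  | nil => simp
  | cons a A ih =>
    cases A with
    | nil =>
      cases B with
      | nil => simp [loadB_cons_cons, loadB]
      | cons b B => simp [loadB_cons_cons, loadB]
    | cons a' A' =>
      simp only [List.cons_append, loadB_cons_cons] at *
      omega

lemma loadB_cons_congr (σ : V → Bool) {x y : V} (h : σ x = σ y) (B : List V) :
    loadB σ (x :: B) = loadB σ (y :: B) := by
  cases B with
  | nil => rfl
  | cons b B => simp [loadB_cons_cons, h]

lemma loadB_concat_congr (σ : V → Bool) {x y : V} (h : σ x = σ y) (A : List V) :
    loadB σ (A ++ [x]) = loadB σ (A ++ [y]) := by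
  induction A with
  | nil => rfl
  | cons a A ih =>
    cases A with
    | nil => simp [loadB_cons_cons, h]
    | cons a' A' => simpa [loadB_cons_cons] using ih

lemma loadB_const (σ : V → Bool) {c : Bool} :
    ∀ {L : List V}, (∀ z ∈ L, σ z = c) → loadB σ L = 0 := by
  intro L
  induction L with
  | nil => intro _; rfl
  | cons x M ih =>
    intro h
    cases M with
    | nil => rfl
    | cons y M' =>
      have hx : σ x = c := h x (by simp)
      have hy : σ y = c := h y (by simp)
      rw [loadB_cons_cons, if_pos (hx.trans hy.symm), ih (fun z hz => h z (by simp [hz]))]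

lemma loadB_cons_le (σ : V → Bool) (x : V) (M : List V) :
    loadB σ (x :: M) ≤ 1 + loadB σ M := by
  cases M with
  | nil => simp
  | cons y M' => rw [loadB_cons_cons]; split <;> omega

lemma loadB_concat_le (σ : V → Bool) (A : List V) (x : V) :
    loadB σ (A ++ [x]) ≤ loadB σ A + 1 := by
  induction A with
  | nil => simp
  | cons a A ih =>
    cases A with
    | nil => simp [loadB_cons_cons]; split <;> omega
    | cons a' A' =>
      simp only [List.cons_append, loadB_cons_cons] at *
      omega

lemma loadB_map {W : Type} (σ : V → Bool) (f : W → V) :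
    ∀ (L : List W), loadB σ (L.map f) = loadB (σ ∘ f) L := by
  intro L
  induction L with
  | nil => rfl
  | cons x M ih =>
    cases M with
    | nil => rfl
    | cons y M' =>
      simp only [List.map_cons] at *
      rw [loadB_cons_cons, loadB_cons_cons, ih]
      rfl

lemma loadB_parity (σ : V → Bool) :
    ∀ (L : List V) (x y : V), L.head? = some x → L.getLast? = some y →
      loadB σ L % 2 = (if σ x = σ y then 0 else 1) := by
  intro L
  induction L with
  | nil => intro x y h; simp at h
  | cons a M ih =>
    intro x y hx hy
    have hax : a = x := by simpa using hx
    subst hax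
    cases M with
    | nil =>
      have : a = y := by simpa using hy
      subst this; simp
    | cons b M' =>
      have h2 := ih b y rfl (by simpa using hy)
      rw [loadB_cons_cons]
      cases ha : σ a <;> cases hb : σ b <;> cases hy2 : σ y <;>
        simp only [ha, hb, hy2] at h2 ⊢ <;> simp at h2 ⊢ <;> omega

lemma loadB_sum (σ : V → Bool) (d : V) :
    ∀ (L : List V), loadB σ L = ∑ k ∈ Finset.range (L.length - 1),
      (if σ (L.getD k d) = σ (L.getD (k + 1) d) then 0 else 1) := by
  intro L
  induction L with
  | nil => simp
  | cons x M ih =>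
    cases M with
    | nil => simp
    | cons y M' =>
      rw [loadB_cons_cons, ih]
      have hlen : (x :: y :: M').length - 1 = ((y :: M').length - 1) + 1 := by simp
      rw [hlen, Finset.sum_range_succ']
      simp only [List.getD_cons_succ, List.getD_cons_zero]
      omega
open Finset SimpleGraph



variable {V : Type} [DecidableEq V]

lemma closed_walk {T : SimpleGraph V} {S : Set V} (hS : ∀ x y, x ∈ S → T.Adj x y → y ∈ S)
    {u v : V} (w : T.Walk u v) (hu : u ∈ S) : v ∈ S := by
  induction w with
  | nil => exact hu
  | cons h p ih => exact ih (hS _ _ hu h)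

/-- In an acyclic graph, an edge lies on a path iff its removal disconnects the endpoints. -/
lemma edge_mem_path_iff {T : SimpleGraph V} (hT : T.IsAcyclic) {x y : V}
    {p : T.Walk x y} (hp : p.IsPath) (e : Sym2 V) :
    e ∈ p.edges ↔ ¬ (T.deleteEdges {e}).Reachable x y := by
  constructor
  · intro he hr
    obtain ⟨w⟩ := hr
    have hw : ∀ f ∈ w.edges, f ≠ e := by
      intro f hf
      have := w.edges_subset_edgeSet hf
      rw [edgeSet_deleteEdges] at this
      simpa using this.2
    let w' : T.Walk x y := w.mapLe (T.deleteEdges_le _)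
    have hw' : ∀ f ∈ w'.edges, f ≠ e := by
      intro f hf
      have : w'.edges = w.edges := by
        have hid : ⇑(Hom.ofLE (T.deleteEdges_le {e})) = id := rfl
        simp [w', Walk.mapLe, Walk.edges_map, hid, Sym2.map_id']
      rw [this] at hf
      exact hw f hf
    have hq : e ∉ (w'.toPath : T.Walk x y).edges := fun h =>
      hw' e (Walk.edges_toPath_subset w' h) rfl
    have := hT.path_unique w'.toPath ⟨p, hp⟩
    rw [this] at hq
    exact hq he
  · intro hnr
    by_contra he
    exact hnr ⟨p.toDeleteEdges {e} (by intro f hf; simp; rintro rfl; exact he hf)⟩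

/-- A side function for an edge of a tree. -/
lemma exists_side {T : SimpleGraph V} (hT : T.IsTree) {a b : V} (hab : T.Adj a b) :
    ∃ σ : V → Bool, σ a ≠ σ b ∧
      ∀ x y : V, (¬ (T.deleteEdges {s(a,b)}).Reachable x y) ↔ σ x ≠ σ y := by
  classical
  set G := T.deleteEdges {s(a,b)} with hG
  have hbridge : ¬ G.Reachable a b := by
    have := (isAcyclic_iff_forall_adj_isBridge.mp hT.2) hab
    rw [isBridge_iff] at this
    exact this
  have hcover : ∀ x : V, G.Reachable a x ∨ G.Reachable b x := by
    intro x
    have hconn := hT.1.preconnected a x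
    obtain ⟨w⟩ := hconn
    refine closed_walk (S := {z | G.Reachable a z ∨ G.Reachable b z}) ?_ w (Or.inl (.refl a))
    intro z y hz hzy
    by_cases hzye : s(z, y) = s(a, b)
    · rw [Sym2.eq_iff] at hzye
      rcases hzye with ⟨rfl, rfl⟩ | ⟨rfl, rfl⟩
      · exact Or.inr (.refl _)
      · exact Or.inl (.refl _)
    · have : G.Adj z y := by rw [hG, deleteEdges_adj]; exact ⟨hzy, by simpa using hzye⟩
      rcases hz with h | h
      · exact Or.inl (h.trans this.reachable)
      · exact Or.inr (h.trans this.reachable)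
  refine ⟨fun x => decide (G.Reachable a x), ?_, ?_⟩
  · simp [Reachable.refl, hbridge]
  · have key : ∀ x y : V, G.Reachable x y ↔
        (decide (G.Reachable a x) = decide (G.Reachable a y)) := by
      intro x y
      constructor
      · intro h
        by_cases hax : G.Reachable a x
        · simp [hax, hax.trans h]
        · have hay : ¬ G.Reachable a y := fun hay => hax (hay.trans h.symm)
          simp [hax, hay]
      · intro h
        by_cases hax : G.Reachable a x
        · have hay : G.Reachable a y := by
            by_contra hay; simp [hax, hay] at h
          exact hax.symm.trans hay
        · have hay : ¬ G.Reachable a y := by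
            by_contra hay; simp [hax, hay] at h
          rcases hcover x with h1 | h1; · exact absurd h1 hax
          rcases hcover y with h2 | h2; · exact absurd h2 hay
          exact h1.symm.trans h2
    intro x y
    show ¬G.Reachable x y ↔ decide (G.Reachable a x) ≠ decide (G.Reachable a y)
    exact not_congr (key x y)


section Part3
variable {V : Type} [DecidableEq V] [Fintype V]

lemma degree_pos_of_connected {T : SimpleGraph V} [DecidableRel T.Adj] (hT : T.Connected)
    (h2 : 2 ≤ Fintype.card V) (v : V) : 0 < T.degree v := by
  obtain ⟨w, hw⟩ := Fintype.exists_ne_of_one_lt_card (by omega) v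
  obtain ⟨p⟩ := hT.preconnected w v
  rw [SimpleGraph.degree_pos_iff_exists_adj]
  cases p.reverse with
  | nil => exact absurd rfl hw
  | cons h q => exact ⟨_, h⟩

lemma exists_leaf_ne {T : SimpleGraph V} [DecidableRel T.Adj] (hT : T.IsTree)
    (h3 : 2 ≤ Fintype.card V) (t : V) : ∃ ℓ : V, ℓ ≠ t ∧ T.degree ℓ = 1 := by
  by_contra hcon
  push_neg at hcon
  have hdeg2 : ∀ v : V, v ≠ t → 2 ≤ T.degree v := by
    intro v hv
    have h1 := degree_pos_of_connected hT.1 h3 v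
    have := hcon v hv
    omega
  have hcd := hT.card_edgeFinset
  have hsum : ∑ v, T.degree v = 2 * T.edgeFinset.card :=
    SimpleGraph.sum_degrees_eq_twice_card_edges T
  have hsplit : (∑ v ∈ Finset.univ.erase t, T.degree v) + T.degree t = ∑ v, T.degree v :=
    Finset.sum_erase_add _ _ (Finset.mem_univ t)
  have hlower := Finset.card_nsmul_le_sum (Finset.univ.erase t) (fun v => T.degree v) 2
    (fun v hv => hdeg2 v (Finset.ne_of_mem_erase hv))
  rw [Finset.card_erase_of_mem (Finset.mem_univ t), Finset.card_univ, smul_eq_mul] at hlower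
  have hdegt := degree_pos_of_connected hT.1 h3 t
  omega

lemma leaf_unique_nbr {T : SimpleGraph V} [DecidableRel T.Adj] {ℓ : V}
    (h : T.degree ℓ = 1) : ∃ u : V, ∀ z : V, T.Adj ℓ z ↔ z = u := by
  rw [SimpleGraph.degree] at h
  obtain ⟨u, hu⟩ := Finset.card_eq_one.mp h
  refine ⟨u, fun z => ?_⟩
  rw [← SimpleGraph.mem_neighborFinset, hu, Finset.mem_singleton]

lemma leaf_not_mem_support {T : SimpleGraph V} {ℓ u : V} (hN : ∀ z, T.Adj ℓ z ↔ z = u)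
    {x y : V} (p : T.Walk x y) (hp : p.IsPath) (hx : x ≠ ℓ) (hy : y ≠ ℓ) :
    ℓ ∉ p.support := by
  intro hmem
  have hspec := p.take_spec hmem
  obtain ⟨w2, h2, q2, hq2⟩ := SimpleGraph.Walk.exists_eq_cons_of_ne (Ne.symm hy)
    (p.dropUntil ℓ hmem)
  obtain ⟨w1, h1, q1, hq1⟩ := SimpleGraph.Walk.exists_eq_cons_of_ne (Ne.symm hx)
    (p.takeUntil ℓ hmem).reverse
  have hw2 : w2 = u := (hN w2).mp h2
  have hw1 : w1 = u := (hN w1).mp h1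
  have he2 : s(ℓ, w2) ∈ (p.dropUntil ℓ hmem).edges := by
    rw [hq2, SimpleGraph.Walk.edges_cons]
    exact List.mem_cons_self
  have he1 : s(ℓ, w1) ∈ (p.takeUntil ℓ hmem).edges := by
    have : s(ℓ, w1) ∈ (p.takeUntil ℓ hmem).reverse.edges := by
      rw [hq1, SimpleGraph.Walk.edges_cons]
      exact List.mem_cons_self
    rwa [SimpleGraph.Walk.edges_reverse, List.mem_reverse] at this
  rw [hw2] at he2
  rw [hw1] at he1
  have hnodup : p.edges.Nodup := hp.isTrail.edges_nodup
  rw [← hspec, SimpleGraph.Walk.edges_append] at hnodup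
  exact (List.disjoint_of_nodup_append hnodup) he1 he2

lemma lift_reach {T : SimpleGraph V} {ℓ : V} :
    ∀ {x y : V} (w : T.Walk x y) (hsup : ∀ z ∈ w.support, z ≠ ℓ),
      (T.induce {z | z ≠ ℓ}).Reachable
        ⟨x, hsup x w.start_mem_support⟩ ⟨y, hsup y w.end_mem_support⟩ := by
  intro x y w
  induction w with
  | nil => intro hsup; exact SimpleGraph.Reachable.refl _
  | @cons x b y h p ih =>
    intro hsup
    have hb : b ≠ ℓ := hsup b (by simp)
    have hx : x ≠ ℓ := hsup x (by simp)
    have step : (T.induce {z | z ≠ ℓ}).Adj ⟨x, hx⟩ ⟨b, hb⟩ := h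
    exact step.reachable.trans (ih fun z hz => hsup z (by simp [hz]))

lemma lift_reach_del {T : SimpleGraph V} {ℓ a b : V} (ha : a ≠ ℓ) (hb : b ≠ ℓ) :
    ∀ {x y : V} (w : T.Walk x y) (hsup : ∀ z ∈ w.support, z ≠ ℓ)
      (hed : s(a, b) ∉ w.edges),
      ((T.induce {z | z ≠ ℓ}).deleteEdges
          {s((⟨a, ha⟩ : {z | z ≠ ℓ}), (⟨b, hb⟩ : {z | z ≠ ℓ}))}).Reachable
        ⟨x, hsup x w.start_mem_support⟩ ⟨y, hsup y w.end_mem_support⟩ := by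
  intro x y w
  induction w with
  | nil => intro hsup hed; exact SimpleGraph.Reachable.refl _
  | @cons x c y h p ih =>
    intro hsup hed
    have hc : c ≠ ℓ := hsup c (by simp)
    have hx : x ≠ ℓ := hsup x (by simp)
    have hne : s((⟨x, hx⟩ : {z | z ≠ ℓ}), (⟨c, hc⟩ : {z | z ≠ ℓ}))
        ∉ ({s((⟨a, ha⟩ : {z | z ≠ ℓ}), (⟨b, hb⟩ : {z | z ≠ ℓ}))} : Set _) := by
      intro hmem
      rw [Set.mem_singleton_iff, Sym2.eq_iff] at hmem
      have hxc : s(x, c) = s(a, b) := by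
        rcases hmem with ⟨h1, h2⟩ | ⟨h1, h2⟩
        · have e1 : x = a := congrArg Subtype.val h1
          have e2 : c = b := congrArg Subtype.val h2
          rw [e1, e2]
        · have e1 : x = b := congrArg Subtype.val h1
          have e2 : c = a := congrArg Subtype.val h2
          rw [e1, e2, Sym2.eq_swap]
      exact hed (by rw [SimpleGraph.Walk.edges_cons, ← hxc]; exact List.mem_cons_self)
    have step : ((T.induce {z | z ≠ ℓ}).deleteEdges
        {s((⟨a, ha⟩ : {z | z ≠ ℓ}), (⟨b, hb⟩ : {z | z ≠ ℓ}))}).Adj ⟨x, hx⟩ ⟨c, hc⟩ := by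
      rw [SimpleGraph.deleteEdges_adj]
      exact ⟨h, hne⟩
    exact step.reachable.trans (ih (fun z hz => hsup z (by simp [hz]))
      (fun hm => hed (by rw [SimpleGraph.Walk.edges_cons]; exact List.mem_cons_of_mem _ hm)))

lemma card_ne_compl (ℓ : V) : Fintype.card {z | z ≠ ℓ} = Fintype.card V - 1 := by
  have : Fintype.card {z : V // ¬ z = ℓ} = Fintype.card V - Fintype.card {z : V // z = ℓ} :=
    Fintype.card_subtype_compl _
  rw [Fintype.card_subtype_eq] at this
  exact this

lemma induce_tree {T : SimpleGraph V} (hT : T.IsTree) {ℓ u : V}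
    (hN : ∀ z, T.Adj ℓ z ↔ z = u) (hne : ∃ x : V, x ≠ ℓ) :
    (T.induce {z | z ≠ ℓ}).IsTree := by
  constructor
  · rw [SimpleGraph.connected_iff]
    constructor
    · rintro ⟨x, hxl⟩ ⟨y, hyl⟩
      obtain ⟨p⟩ := hT.1.preconnected x y
      have hpath := p.toPath.2
      have hsup : ∀ z ∈ (p.toPath : T.Walk x y).support, z ≠ ℓ := by
        intro z hz
        rintro rfl
        exact leaf_not_mem_support hN _ hpath hxl hyl hz
      exact lift_reach _ hsup
    · obtain ⟨x, hx⟩ := hne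
      exact ⟨⟨x, hx⟩⟩
  · intro v' c hc
    let hom : T.induce {z | z ≠ ℓ} →g T := ⟨Subtype.val, fun h => h⟩
    have hinj : Function.Injective ⇑hom := fun p q hpq => Subtype.val_injective hpq
    exact hT.2 _ (hc.map hinj)

lemma transfer_reach {T : SimpleGraph V} (hT : T.IsTree) {ℓ u : V}
    (hN : ∀ z, T.Adj ℓ z ↔ z = u) {a b : V} (ha : a ≠ ℓ) (hb : b ≠ ℓ)
    {x y : V} (hx : x ≠ ℓ) (hy : y ≠ ℓ) :
    ((T.induce {z | z ≠ ℓ}).deleteEdges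
        {s((⟨a, ha⟩ : {z | z ≠ ℓ}), (⟨b, hb⟩ : {z | z ≠ ℓ}))}).Reachable ⟨x, hx⟩ ⟨y, hy⟩
      ↔ (T.deleteEdges {s(a, b)}).Reachable x y := by
  constructor
  · intro h
    let hom : ((T.induce {z | z ≠ ℓ}).deleteEdges
        {s((⟨a, ha⟩ : {z | z ≠ ℓ}), (⟨b, hb⟩ : {z | z ≠ ℓ}))}) →g T.deleteEdges {s(a, b)} := by
      refine ⟨Subtype.val, ?_⟩
      rintro ⟨x', hx'⟩ ⟨y', hy'⟩ hadj
      rw [SimpleGraph.deleteEdges_adj] at hadj ⊢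
      refine ⟨hadj.1, ?_⟩
      intro hmem
      rw [Set.mem_singleton_iff, Sym2.eq_iff] at hmem
      apply hadj.2
      rw [Set.mem_singleton_iff]
      rcases hmem with ⟨hxa, hyb⟩ | ⟨hxb, hya⟩
      · rw [Sym2.eq_iff]
        exact Or.inl ⟨Subtype.ext hxa, Subtype.ext hyb⟩
      · rw [Sym2.eq_iff]
        exact Or.inr ⟨Subtype.ext hxb, Subtype.ext hya⟩
    have hmap := h.map hom
    exact hmap
  · intro h
    obtain ⟨p⟩ := hT.1.preconnected x y
    have hpath := p.toPath.2
    have hsup : ∀ z ∈ (p.toPath : T.Walk x y).support, z ≠ ℓ := by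
      intro z hz
      rintro rfl
      exact leaf_not_mem_support hN _ hpath hx hy hz
    have hed : s(a, b) ∉ (p.toPath : T.Walk x y).edges := by
      intro hmem
      exact (edge_mem_path_iff hT.2 hpath s(a, b)).mp hmem h
    exact lift_reach_del ha hb _ hsup hed

end Part3
section Part4
variable {V : Type} [DecidableEq V] [Fintype V]

lemma sigma_const_leaf {T : SimpleGraph V} (hT : T.IsTree) {ℓ u : V}
    (hN : ∀ z, T.Adj ℓ z ↔ z = u)
    (σ : V → Bool) (hσ : ∀ x y, (¬ (T.deleteEdges {s(ℓ, u)}).Reachable x y) ↔ σ x ≠ σ y) :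
    ∀ z, z ≠ ℓ → σ z = σ u := by
  intro z hz
  have huℓ : T.Adj ℓ u := (hN u).mpr rfl
  have hu_ne : u ≠ ℓ := fun h => T.irrefl (h ▸ huℓ)
  have hreach : (T.deleteEdges {s(ℓ, u)}).Reachable z u := by
    have hconn := (induce_tree hT hN ⟨u, hu_ne⟩).1
    have h := hconn.preconnected ⟨z, hz⟩ ⟨u, hu_ne⟩
    let hom : T.induce {w | w ≠ ℓ} →g T.deleteEdges {s(ℓ, u)} := by
      refine ⟨Subtype.val, ?_⟩
      rintro ⟨x, hx⟩ ⟨y, hy⟩ hadj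
      rw [SimpleGraph.deleteEdges_adj]
      refine ⟨hadj, ?_⟩
      rw [Set.mem_singleton_iff, Sym2.eq_iff]
      rintro (⟨h1, h2⟩ | ⟨h1, h2⟩)
      · exact hx h1
      · exact hy h2
    exact h.map hom
  by_contra hne
  exact (hσ z u).mpr hne hreach

lemma sigma_adj_eq {T : SimpleGraph V} {a b x y : V} (hxy : T.Adj x y)
    (hne : s(x, y) ≠ s(a, b))
    (σ : V → Bool) (hσ : ∀ x y, (¬ (T.deleteEdges {s(a, b)}).Reachable x y) ↔ σ x ≠ σ y) :
    σ x = σ y := by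
  have hadj : (T.deleteEdges {s(a, b)}).Adj x y := by
    rw [SimpleGraph.deleteEdges_adj]
    exact ⟨hxy, by simpa using hne⟩
  by_contra h
  exact (hσ x y).mpr h hadj.reachable

/-- The conclusion of the construction lemma. -/
def GoodList (T : SimpleGraph V) (s t : V) (L : List V) : Prop :=
  L.Nodup ∧ (∀ x : V, x ∈ L) ∧ L.head? = some s ∧ L.getLast? = some t ∧
    ∀ (a b : V), T.Adj a b → ∀ σ : V → Bool,
      (∀ x y : V, (¬ (T.deleteEdges {s(a, b)}).Reachable x y) ↔ σ x ≠ σ y) →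
      loadB σ L ≤ 2

lemma caseA {T : SimpleGraph V} (hT : T.IsTree) {ℓ u s t : V}
    (hN : ∀ z, T.Adj ℓ z ↔ z = u) (hℓs : ℓ ≠ s) (hℓt : ℓ ≠ t) (hst : s ≠ t)
    (L' : List {z | z ≠ ℓ}) (hnd : L'.Nodup) (hcompl : ∀ x, x ∈ L')
    (hhead : L'.head? = some ⟨s, Ne.symm hℓs⟩) (hlast : L'.getLast? = some ⟨t, Ne.symm hℓt⟩)
    (hload : ∀ (a' b' : {z | z ≠ ℓ}), (T.induce {z | z ≠ ℓ}).Adj a' b' →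
      ∀ σ' : {z | z ≠ ℓ} → Bool,
        (∀ x' y', (¬ ((T.induce {z | z ≠ ℓ}).deleteEdges {s(a', b')}).Reachable x' y')
          ↔ σ' x' ≠ σ' y') →
        loadB σ' L' ≤ 2) :
    ∃ L : List V, GoodList T s t L := by
  classical
  have huℓ : T.Adj ℓ u := (hN u).mpr rfl
  have hu_ne : u ≠ ℓ := fun h => T.irrefl (h ▸ huℓ)
  set L'' : List V := L'.map Subtype.val with hLdef
  have hndL'' : L''.Nodup := hnd.map Subtype.val_injective
  have hmemL'' : ∀ x : V, x ≠ ℓ → x ∈ L'' :=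
    fun x hx => List.mem_map.mpr ⟨⟨x, hx⟩, hcompl _, rfl⟩
  have hnotmem : ℓ ∉ L'' := by
    intro h
    obtain ⟨z, _, hzeq⟩ := List.mem_map.mp h
    exact z.2 hzeq
  have hne_of_mem : ∀ z ∈ L'', z ≠ ℓ := fun z hz h => hnotmem (h ▸ hz)
  have hheadL'' : L''.head? = some s := by rw [hLdef, List.head?_map, hhead]; rfl
  have hlastL'' : L''.getLast? = some t := by rw [hLdef, List.getLast?_map, hlast]; rfl
  obtain ⟨A, B, hAB⟩ := List.append_of_mem (hmemL'' u hu_ne)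
  -- the inserted list
  have key : ∀ L : List V, List.Perm L (ℓ :: L'') → L.head? = some s → L.getLast? = some t →
      (∀ (a b : V), T.Adj a b → ∀ σ : V → Bool,
        (∀ x y : V, (¬ (T.deleteEdges {s(a, b)}).Reachable x y) ↔ σ x ≠ σ y) →
        loadB σ L ≤ 2) →
      ∃ L₀ : List V, GoodList T s t L₀ := by
    intro L hperm hh hl hld
    refine ⟨L, hperm.nodup_iff.mpr (List.nodup_cons.mpr ⟨hnotmem, hndL''⟩), ?_, hh, hl, hld⟩
    intro x
    rw [hperm.mem_iff]
    by_cases hx : x = ℓ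
    · simp [hx]
    · simp [hmemL'' x hx]
  -- facts about σ for edges not touching ℓ
  have main : ∀ (a b : V), T.Adj a b → a ≠ ℓ → b ≠ ℓ → ∀ σ : V → Bool,
      (∀ x y : V, (¬ (T.deleteEdges {s(a, b)}).Reachable x y) ↔ σ x ≠ σ y) →
      loadB σ L'' ≤ 2 ∧ σ ℓ = σ u := by
    intro a b hab ha hb σ hσ
    constructor
    · have hadj' : (T.induce {z | z ≠ ℓ}).Adj ⟨a, ha⟩ ⟨b, hb⟩ := hab
      have hσ' : ∀ x' y' : {z | z ≠ ℓ},
          (¬ ((T.induce {z | z ≠ ℓ}).deleteEdges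
            {s((⟨a, ha⟩ : {z | z ≠ ℓ}), ⟨b, hb⟩)}).Reachable x' y')
          ↔ (σ ∘ Subtype.val) x' ≠ (σ ∘ Subtype.val) y' := by
        rintro ⟨x, hx⟩ ⟨y, hy⟩
        rw [transfer_reach hT hN ha hb hx hy]
        exact hσ x y
      have hL' := hload ⟨a, ha⟩ ⟨b, hb⟩ hadj' (σ ∘ Subtype.val) hσ'
      rwa [← loadB_map σ Subtype.val] at hL'
    · refine sigma_adj_eq huℓ ?_ σ hσ
      intro hmem
      rw [Sym2.eq_iff] at hmem
      rcases hmem with ⟨h1, h2⟩ | ⟨h1, h2⟩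
      · exact ha h1.symm
      · exact hb h1.symm
  -- σ is constant away from ℓ for the leaf edge
  have hconstall : ∀ σ : V → Bool,
      (∀ x y : V, (¬ (T.deleteEdges {s(ℓ, u)}).Reachable x y) ↔ σ x ≠ σ y) →
      ∀ M : List V, (∀ z ∈ M, z ≠ ℓ) → loadB σ M = 0 := by
    intro σ hσ M hM
    exact loadB_const σ (c := σ u) (fun z hz => sigma_const_leaf hT hN σ hσ z (hM z hz))
  cases B with
  | nil =>
    -- u is the last element; insert ℓ before u
    have hA_ne : A ≠ [] := by
      rintro rfl
      simp only [List.nil_append] at hAB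
      rw [hAB] at hheadL'' hlastL''
      simp at hheadL'' hlastL''
      rw [← hheadL'', ← hlastL''] at hst
      exact hst rfl
    obtain ⟨a0, A0, rfl⟩ := List.exists_cons_of_ne_nil hA_ne
    refine key ((a0 :: A0) ++ [ℓ, u]) ?_ ?_ ?_ ?_
    · rw [hAB]
      exact List.perm_middle (a := ℓ) (l₁ := a0 :: A0) (l₂ := [u])
    · have := hheadL''
      rw [hAB] at this
      simpa using this
    · have hut : u = t := by
        have := hlastL''
        rw [hAB, List.getLast?_append_cons] at this
        simpa using this
      rw [show (a0 :: A0) ++ [ℓ, u] = (a0 :: A0) ++ ℓ :: [u] from rfl,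
        List.getLast?_append_cons]
      simpa using hut
    · intro a b hab σ hσ
      by_cases haℓ : a = ℓ
      · subst haℓ
        have hbu : b = u := (hN b).mp hab
        subst hbu
        have hsplit := loadB_split σ (a0 :: A0) a [b]
        have h1 : loadB σ ((a0 :: A0) ++ [a]) ≤ loadB σ (a0 :: A0) + 1 :=
          loadB_concat_le σ _ a
        have h2 : loadB σ (a0 :: A0) = 0 := by
          apply hconstall σ hσ
          intro z hz
          exact hne_of_mem z (by rw [hAB]; exact List.mem_append_left _ hz)
        have h3 : loadB σ [a, b] ≤ 1 := by
          rw [loadB_cons_cons]; split <;> simp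
        omega
      · by_cases hbℓ : b = ℓ
        · subst hbℓ
          have hau : a = u := (hN a).mp hab.symm
          subst hau
          have hswap : ({s(a, b)} : Set (Sym2 V)) = {s(b, a)} := by rw [Sym2.eq_swap]
          rw [hswap] at hσ
          have hsplit := loadB_split σ (a0 :: A0) b [a]
          have h1 : loadB σ ((a0 :: A0) ++ [b]) ≤ loadB σ (a0 :: A0) + 1 :=
            loadB_concat_le σ _ b
          have h2 : loadB σ (a0 :: A0) = 0 := by
            apply hconstall σ hσ
            intro z hz
            exact hne_of_mem z (by rw [hAB]; exact List.mem_append_left _ hz)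
          have h3 : loadB σ [b, a] ≤ 1 := by
            rw [loadB_cons_cons]; split <;> simp
          omega
        · obtain ⟨hL2, hσℓu⟩ := main a b hab haℓ hbℓ σ hσ
          have hsplit := loadB_split σ (a0 :: A0) ℓ [u]
          have h1 : loadB σ ((a0 :: A0) ++ [ℓ]) = loadB σ ((a0 :: A0) ++ [u]) :=
            loadB_concat_congr σ hσℓu _
          have h2 : loadB σ [ℓ, u] = 0 := by
            rw [loadB_cons_cons, if_pos hσℓu]; simp
          rw [hAB] at hL2
          omega
  | cons b0 B0 =>
    refine key (A ++ u :: ℓ :: (b0 :: B0)) ?_ ?_ ?_ ?_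
    · rw [hAB]
      have h := List.perm_middle (a := ℓ) (l₁ := A ++ [u]) (l₂ := b0 :: B0)
      simpa using h
    · rw [hAB] at hheadL''
      cases A with
      | nil => simpa using hheadL''
      | cons a0 A0 => simpa using hheadL''
    · rw [hAB, List.getLast?_append_cons] at hlastL''
      rw [List.getLast?_append_cons]
      simpa using hlastL''
    · intro a b hab σ hσ
      by_cases haℓ : a = ℓ
      · subst haℓ
        have hbu : b = u := (hN b).mp hab
        subst hbu
        have hsplit : loadB σ (A ++ b :: a :: (b0 :: B0))
            = loadB σ (A ++ [b]) + loadB σ (b :: a :: (b0 :: B0)) :=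
          loadB_split σ A b _
        have h2 : loadB σ (A ++ [b]) = 0 := by
          apply hconstall σ hσ
          intro z hz
          rcases List.mem_append.mp hz with h | h
          · exact hne_of_mem z (by rw [hAB]; exact List.mem_append_left _ h)
          · simp at h
            rw [h]; exact hu_ne
        have h3 : loadB σ (b :: a :: (b0 :: B0))
            = (if σ b = σ a then 0 else 1) + loadB σ (a :: b0 :: B0) := loadB_cons_cons _ _ _ _
        have h4 : loadB σ (a :: b0 :: B0)
            = (if σ a = σ b0 then 0 else 1) + loadB σ (b0 :: B0) := loadB_cons_cons _ _ _ _
        have h5 : loadB σ (b0 :: B0) = 0 := by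
          apply hconstall σ hσ
          intro z hz
          exact hne_of_mem z (by rw [hAB]; exact List.mem_append_right _ (by simp [hz]))
        have hi1 : (if σ b = σ a then 0 else 1) ≤ 1 := by split <;> simp
        have hi2 : (if σ a = σ b0 then 0 else 1) ≤ 1 := by split <;> simp
        omega
      · by_cases hbℓ : b = ℓ
        · subst hbℓ
          have hau : a = u := (hN a).mp hab.symm
          subst hau
          have hswap : ({s(a, b)} : Set (Sym2 V)) = {s(b, a)} := by rw [Sym2.eq_swap]
          rw [hswap] at hσ
          have hsplit : loadB σ (A ++ a :: b :: (b0 :: B0))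
              = loadB σ (A ++ [a]) + loadB σ (a :: b :: (b0 :: B0)) :=
            loadB_split σ A a _
          have h2 : loadB σ (A ++ [a]) = 0 := by
            apply hconstall σ hσ
            intro z hz
            rcases List.mem_append.mp hz with h | h
            · exact hne_of_mem z (by rw [hAB]; exact List.mem_append_left _ h)
            · simp at h
              rw [h]; exact hu_ne
          have h3 : loadB σ (a :: b :: (b0 :: B0))
              = (if σ a = σ b then 0 else 1) + loadB σ (b :: b0 :: B0) := loadB_cons_cons _ _ _ _
          have h4 : loadB σ (b :: b0 :: B0)
              = (if σ b = σ b0 then 0 else 1) + loadB σ (b0 :: B0) := loadB_cons_cons _ _ _ _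
          have h5 : loadB σ (b0 :: B0) = 0 := by
            apply hconstall σ hσ
            intro z hz
            exact hne_of_mem z (by rw [hAB]; exact List.mem_append_right _ (by simp [hz]))
          have hi1 : (if σ a = σ b then 0 else 1) ≤ 1 := by split <;> simp
          have hi2 : (if σ b = σ b0 then 0 else 1) ≤ 1 := by split <;> simp
          omega
        · obtain ⟨hL2, hσℓu⟩ := main a b hab haℓ hbℓ σ hσ
          have hsplit : loadB σ (A ++ u :: ℓ :: (b0 :: B0))
              = loadB σ (A ++ [u]) + loadB σ (u :: ℓ :: (b0 :: B0)) :=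
            loadB_split σ A u _
          have h3 : loadB σ (u :: ℓ :: (b0 :: B0))
              = (if σ u = σ ℓ then 0 else 1) + loadB σ (ℓ :: b0 :: B0) := loadB_cons_cons _ _ _ _
          have h4 : loadB σ (ℓ :: b0 :: B0) = loadB σ (u :: b0 :: B0) :=
            loadB_cons_congr σ hσℓu _
          have h5 : loadB σ (A ++ u :: (b0 :: B0))
              = loadB σ (A ++ [u]) + loadB σ (u :: (b0 :: B0)) := loadB_split σ A u _
          rw [hAB] at hL2
          rw [if_pos hσℓu.symm] at h3
          omega

end Part4
section Part5
variable {V : Type} [DecidableEq V] [Fintype V]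

lemma caseB {T : SimpleGraph V} (hT : T.IsTree) {s u t : V}
    (hN : ∀ z, T.Adj s z ↔ z = u) (hst : s ≠ t)
    (L' : List {z | z ≠ s}) (hnd : L'.Nodup) (hcompl : ∀ x, x ∈ L')
    (hu_ne : u ≠ s)
    (hhead : L'.head? = some ⟨u, hu_ne⟩) (hlast : L'.getLast? = some ⟨t, Ne.symm hst⟩)
    (hload : ∀ (a' b' : {z | z ≠ s}), (T.induce {z | z ≠ s}).Adj a' b' →
      ∀ σ' : {z | z ≠ s} → Bool,
        (∀ x' y', (¬ ((T.induce {z | z ≠ s}).deleteEdges {s(a', b')}).Reachable x' y')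
          ↔ σ' x' ≠ σ' y') →
        loadB σ' L' ≤ 2) :
    ∃ L : List V, GoodList T s t L := by
  classical
  have huℓ : T.Adj s u := (hN u).mpr rfl
  set L'' : List V := L'.map Subtype.val with hLdef
  have hndL'' : L''.Nodup := hnd.map Subtype.val_injective
  have hmemL'' : ∀ x : V, x ≠ s → x ∈ L'' :=
    fun x hx => List.mem_map.mpr ⟨⟨x, hx⟩, hcompl _, rfl⟩
  have hnotmem : s ∉ L'' := by
    intro h
    obtain ⟨z, _, hzeq⟩ := List.mem_map.mp h
    exact z.2 hzeq
  have hne_of_mem : ∀ z ∈ L'', z ≠ s := fun z hz h => hnotmem (h ▸ hz)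
  have hheadL'' : L''.head? = some u := by rw [hLdef, List.head?_map, hhead]; rfl
  have hlastL'' : L''.getLast? = some t := by rw [hLdef, List.getLast?_map, hlast]; rfl
  obtain ⟨rest, hrest⟩ : ∃ rest, L'' = u :: rest := by
    cases hL : L'' with
    | nil => rw [hL] at hheadL''; simp at hheadL''
    | cons w rest =>
      rw [hL] at hheadL''
      simp at hheadL''
      exact ⟨rest, by rw [hheadL'']⟩
  refine ⟨s :: L'', List.nodup_cons.mpr ⟨hnotmem, hndL''⟩, ?_, rfl, ?_, ?_⟩
  · intro x
    by_cases hx : x = s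
    · simp [hx]
    · exact List.mem_cons_of_mem _ (hmemL'' x hx)
  · rw [hrest, List.getLast?_cons_cons, ← hrest]
    exact hlastL''
  · intro a b hab σ hσ
    have hconst : (∀ x y : V, (¬ (T.deleteEdges {s(s, u)}).Reachable x y) ↔ σ x ≠ σ y) →
        ∀ M : List V, (∀ z ∈ M, z ≠ s) → loadB σ M = 0 := by
      intro hσ' M hM
      exact loadB_const σ (c := σ u) (fun z hz => sigma_const_leaf hT hN σ hσ' z (hM z hz))
    by_cases has : a = s
    · subst has
      have hbu : b = u := (hN b).mp hab
      subst hbu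
      rw [hrest, loadB_cons_cons]
      have h5 : loadB σ (b :: rest) = 0 := by
        apply hconst hσ
        intro z hz
        exact hne_of_mem z (by rw [hrest]; exact hz)
      have : (if σ a = σ b then 0 else 1) ≤ 1 := by split <;> simp
      omega
    · by_cases hbs : b = s
      · subst hbs
        have hau : a = u := (hN a).mp hab.symm
        subst hau
        have hswap : ({s(a, b)} : Set (Sym2 V)) = {s(b, a)} := by rw [Sym2.eq_swap]
        rw [hswap] at hσ
        rw [hrest, loadB_cons_cons]
        have h5 : loadB σ (a :: rest) = 0 := by
          apply hconst hσ
          intro z hz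
          exact hne_of_mem z (by rw [hrest]; exact hz)
        have : (if σ b = σ a then 0 else 1) ≤ 1 := by split <;> simp
        omega
      · -- a, b ≠ s : transfer to the induced graph
        have hadj' : (T.induce {z | z ≠ s}).Adj ⟨a, has⟩ ⟨b, hbs⟩ := hab
        have hσ' : ∀ x' y' : {z | z ≠ s},
            (¬ ((T.induce {z | z ≠ s}).deleteEdges
              {s((⟨a, has⟩ : {z | z ≠ s}), ⟨b, hbs⟩)}).Reachable x' y')
            ↔ (σ ∘ Subtype.val) x' ≠ (σ ∘ Subtype.val) y' := by
          rintro ⟨x, hx⟩ ⟨y, hy⟩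
          rw [transfer_reach hT hN has hbs hx hy]
          exact hσ x y
        have hL2 := hload ⟨a, has⟩ ⟨b, hbs⟩ hadj' (σ ∘ Subtype.val) hσ'
        rw [← loadB_map σ Subtype.val, ← hLdef] at hL2
        have hσsu : σ s = σ u := by
          refine sigma_adj_eq huℓ ?_ σ hσ
          intro hmem
          rw [Sym2.eq_iff] at hmem
          rcases hmem with ⟨h1, h2⟩ | ⟨h1, h2⟩
          · exact has h1.symm
          · exact hbs h1.symm
        rw [hrest, loadB_cons_cons, if_pos hσsu, ← hrest]
        omega

end Part5
section Part6

lemma lemE (n : ℕ) : ∀ (V : Type) [Fintype V] [DecidableEq V] (T : SimpleGraph V),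
    T.IsTree → Fintype.card V = n → ∀ s t : V, (s = t → n = 1) →
    ∃ L : List V, GoodList T s t L := by
  induction n using Nat.strong_induction_on with
  | _ n IH =>
  intro V _ _ T hT hcard s t hst1
  rcases Nat.lt_or_ge n 2 with h2 | h2
  · -- n ≤ 1, so n = 1 and V is a singleton
    have hpos : 0 < Fintype.card V := Fintype.card_pos_iff.mpr ⟨s⟩
    have hn1 : n = 1 := by omega
    have hsub : ∀ x : V, x = s := by
      have hss : Subsingleton V := by
        rw [← Fintype.card_le_one_iff_subsingleton, hcard, hn1]
      exact fun x => Subsingleton.elim x s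
    refine ⟨[s], by simp, fun x => by simp [hsub x], rfl, by simp [(hsub t).symm], ?_⟩
    intro a b hab σ hσ
    simp
  · have hst' : s ≠ t := fun h => by have := hst1 h; omega
    rcases Nat.lt_or_ge n 3 with h3 | h3
    · -- n = 2
      have hn2 : n = 2 := by omega
      have huniv : ({s, t} : Finset V) = Finset.univ := by
        apply Finset.eq_univ_of_card
        rw [Finset.card_insert_of_notMem (by simpa using hst'), Finset.card_singleton,
          hcard, hn2]
      refine ⟨[s, t], by simp [hst'], ?_, rfl, rfl, ?_⟩
      · intro x
        have : x ∈ ({s, t} : Finset V) := huniv ▸ Finset.mem_univ x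
        simpa using this
      · intro a b hab σ hσ
        rw [loadB_cons_cons]
        have h1 : (if σ s = σ t then 0 else 1) ≤ 1 := by split <;> simp
        have h0 : loadB σ [t] = 0 := rfl
        omega
    · -- n ≥ 3
      classical
      letI : DecidableRel T.Adj := Classical.decRel _
      obtain ⟨ℓ1, hℓ1t, hdeg1⟩ := exists_leaf_ne hT (by omega) t
      by_cases hℓ1s : ℓ1 = s
      · -- s is a leaf
        rw [hℓ1s] at hdeg1
        obtain ⟨u, hNs⟩ := leaf_unique_nbr hdeg1
        have hus : T.Adj s u := (hNs u).mpr rfl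
        have hu_ne : u ≠ s := fun h => T.irrefl (h ▸ hus)
        obtain ⟨ℓ2, hℓ2s, hdeg2⟩ := exists_leaf_ne hT (by omega) s
        by_cases hℓ2t : ℓ2 = t
        · -- both s and t are leaves: use case B (peel off s); need u ≠ t
          rw [hℓ2t] at hdeg2 hℓ2s
          have hut : u ≠ t := by
            intro h
            -- V = {s, t}, contradicting n ≥ 3
            obtain ⟨w, hNt⟩ := leaf_unique_nbr hdeg2
            have hws : w = s := by
              have hts : T.Adj t s := h ▸ hus.symm
              exact ((hNt s).mp hts).symm
            have hclosed : ∀ x : V, x = s ∨ x = t := by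
              intro x
              obtain ⟨p⟩ := hT.1.preconnected s x
              refine closed_walk (S := {z | z = s ∨ z = t}) ?_ p (Or.inl rfl)
              intro z y hz hzy
              rcases hz with rfl | rfl
              · exact Or.inr (h ▸ (hNs y).mp hzy)
              · left
                have := (hNt y).mp hzy
                rw [this, hws]
            have hsub : (Finset.univ : Finset V) ⊆ {s, t} := by
              intro x _
              rcases hclosed x with rfl | rfl <;> simp
            have hcle := Finset.card_le_card hsub
            rw [Finset.card_univ, hcard] at hcle
            have : ({s, t} : Finset V).card ≤ 2 :=
              le_trans (Finset.card_insert_le _ _) (by simp)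
            omega
          -- apply IH on V minus s
          have hcard' : Fintype.card {z | z ≠ s} = n - 1 := by
            rw [card_ne_compl, hcard]
          have htree' := induce_tree hT hNs ⟨u, hu_ne⟩
          obtain ⟨L', hnd', hcompl', hhead', hlast', hload'⟩ :=
            IH (n - 1) (by omega) {z | z ≠ s} (T.induce {z | z ≠ s}) htree' hcard'
              ⟨u, hu_ne⟩ ⟨t, Ne.symm hst'⟩
              (fun hh => absurd (congrArg Subtype.val hh) hut)
          exact caseB hT hNs hst' L' hnd' hcompl' hu_ne hhead' hlast' hload'
        · -- ℓ2 is a leaf distinct from s and t: use case A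
          obtain ⟨u2, hN2⟩ := leaf_unique_nbr hdeg2
          have hu2 : T.Adj ℓ2 u2 := (hN2 u2).mpr rfl
          have hu2_ne : u2 ≠ ℓ2 := fun h => T.irrefl (h ▸ hu2)
          have hcard' : Fintype.card {z | z ≠ ℓ2} = n - 1 := by
            rw [card_ne_compl, hcard]
          have htree' := induce_tree hT hN2 ⟨u2, hu2_ne⟩
          obtain ⟨L', hnd', hcompl', hhead', hlast', hload'⟩ :=
            IH (n - 1) (by omega) {z | z ≠ ℓ2} (T.induce {z | z ≠ ℓ2}) htree' hcard'
              ⟨s, Ne.symm hℓ2s⟩ ⟨t, Ne.symm hℓ2t⟩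
              (fun hh => absurd (congrArg Subtype.val hh) hst')
          exact caseA hT hN2 hℓ2s hℓ2t hst' L' hnd' hcompl' hhead' hlast' hload'
      · -- ℓ1 is a leaf distinct from s and t: use case A
        obtain ⟨u1, hN1⟩ := leaf_unique_nbr hdeg1
        have hu1 : T.Adj ℓ1 u1 := (hN1 u1).mpr rfl
        have hu1_ne : u1 ≠ ℓ1 := fun h => T.irrefl (h ▸ hu1)
        have hcard' : Fintype.card {z | z ≠ ℓ1} = n - 1 := by
          rw [card_ne_compl, hcard]
        have htree' := induce_tree hT hN1 ⟨u1, hu1_ne⟩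
        obtain ⟨L', hnd', hcompl', hhead', hlast', hload'⟩ :=
          IH (n - 1) (by omega) {z | z ≠ ℓ1} (T.induce {z | z ≠ ℓ1}) htree' hcard'
            ⟨s, Ne.symm hℓ1s⟩ ⟨t, Ne.symm hℓ1t⟩
            (fun h => absurd (congrArg Subtype.val h) hst')
        exact caseA hT hN1 hℓ1s hℓ1t hst' L' hnd' hcompl' hhead' hlast' hload'

end Part6
section Part7

lemma flips_lower (g : ℕ → Bool) : ∀ i j : ℕ, i ≤ j → g i ≠ g j →
    1 ≤ ∑ k ∈ Finset.Ico i j, (if g k = g (k + 1) then 0 else 1) := by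
  intro i j hij
  induction j, hij using Nat.le_induction with
  | base => intro h; exact absurd rfl h
  | succ j hij ih =>
    intro h
    rw [Finset.sum_Ico_succ_top hij]
    by_cases hgj : g i = g j
    · rw [if_neg (fun hq => h (hgj.trans hq))]
      omega
    · have := ih hgj
      omega

variable {V : Type} [DecidableEq V] [Fintype V]

lemma final_sum {T : SimpleGraph V} (hT : T.IsTree)
    (n : ℕ) (hn : 1 ≤ n) (hcard : Fintype.card V = n)
    (P : (x y : V) → T.Walk x y) (hP : ∀ x y, (P x y).IsPath)
    {L : List V} (hnd : L.Nodup) (hcompl : ∀ x : V, x ∈ L) :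
    ∃ v : Fin n ≃ V, ∀ a b : V, T.Adj a b → ∀ σ : V → Bool,
      (∀ x y : V, (¬ (T.deleteEdges {s(a, b)}).Reachable x y) ↔ σ x ≠ σ y) →
      (∑ i : Fin (n - 1),
        if s(a, b) ∈ (P (v ⟨i.val, Nat.lt_of_lt_of_le i.isLt (Nat.sub_le n 1)⟩)
            (v ⟨i.val + 1, Nat.add_lt_of_lt_sub i.isLt⟩)).edges then 1 else 0)
        = loadB σ L := by
  classical
  have huniv : L.toFinset = Finset.univ := Finset.eq_univ_iff_forall.mpr
    (fun x => List.mem_toFinset.mpr (hcompl x))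
  have hlen : L.length = n := by
    rw [← hcard, ← Finset.card_univ, ← huniv, List.toFinset_card_of_nodup hnd]
  obtain ⟨d⟩ : Nonempty V := Fintype.card_pos_iff.mp (by omega)
  let eqv := hnd.getEquivOfForallMemList L hcompl
  refine ⟨(finCongr hlen.symm).trans eqv, ?_⟩
  intro a b hab σ hσ
  have hvk : ∀ (k : ℕ) (hk : k < n),
      ((finCongr hlen.symm).trans eqv) ⟨k, hk⟩ = L.getD k d := by
    intro k hk
    have hk' : k < L.length := by omega
    rw [List.getD_eq_get _ _ ⟨k, hk'⟩]
    rfl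
  have hterm : ∀ i : Fin (n - 1),
      (if s(a, b) ∈ (P (((finCongr hlen.symm).trans eqv) ⟨i.val, Nat.lt_of_lt_of_le i.isLt (Nat.sub_le n 1)⟩)
          (((finCongr hlen.symm).trans eqv) ⟨i.val + 1, Nat.add_lt_of_lt_sub i.isLt⟩)).edges
        then (1 : ℕ) else 0)
      = (if σ (L.getD i.val d) = σ (L.getD (i.val + 1) d) then 0 else 1) := by
    intro i
    have hi : i.val < n := by have := i.isLt; omega
    have hi1 : i.val + 1 < n := by have := i.isLt; omega
    rw [hvk i.val hi, hvk (i.val + 1) hi1]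
    set x := L.getD i.val d
    set y := L.getD (i.val + 1) d
    have hiff : s(a, b) ∈ (P x y).edges ↔ σ x ≠ σ y := by
      rw [edge_mem_path_iff hT.2 (hP x y)]
      exact hσ x y
    by_cases hxy : σ x = σ y
    · rw [if_neg (fun hmem => (hiff.mp hmem) hxy), if_pos hxy]
    · rw [if_pos (hiff.mpr hxy), if_neg hxy]
  calc (∑ i : Fin (n - 1),
        if s(a, b) ∈ (P (((finCongr hlen.symm).trans eqv) ⟨i.val, Nat.lt_of_lt_of_le i.isLt (Nat.sub_le n 1)⟩)
            (((finCongr hlen.symm).trans eqv) ⟨i.val + 1, Nat.add_lt_of_lt_sub i.isLt⟩)).edges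
          then (1 : ℕ) else 0)
      = ∑ i : Fin (n - 1), (if σ (L.getD i.val d) = σ (L.getD (i.val + 1) d) then 0 else 1) :=
        Finset.sum_congr rfl (fun i _ => hterm i)
    _ = ∑ k ∈ Finset.range (n - 1), (if σ (L.getD k d) = σ (L.getD (k + 1) d) then 0 else 1) :=
        Fin.sum_univ_eq_sum_range (fun k => if σ (L.getD k d) = σ (L.getD (k + 1) d) then 0 else 1) (n - 1)
    _ = loadB σ L := by rw [loadB_sum σ d L, hlen]

end Part7

end CVNE

open CVNE

/-- Characterization underlying the polynomial-time algorithm for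
cVNE of a uniform linear virtual network on a tree physical network.  Let `T` be a
finite tree on `n` vertices with edge capacities `c ≥ 1`, and let `P x y` denote the
(unique) simple path of `T` from `x` to `y`.  There is a bijection
`v : {1,…,n} → V(T)` such that every edge `e` lies on at most `c e` of the paths
`P (v i) (v (i+1))` iff there are vertices `s, t` such that the path from `s` to `t`
contains every edge of capacity `1`. -/
theorem uniform_line_on_tree_cVNE_characterization {V : Type} [Fintype V]
    [DecidableEq V] (T : SimpleGraph V) (hT : T.IsTree)
    (n : ℕ) (hn : 1 ≤ n) (hcard : Fintype.card V = n)
    (c : Sym2 V → ℕ) (hc : ∀ e ∈ T.edgeSet, 1 ≤ c e)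
    (P : (x y : V) → T.Walk x y) (hP : ∀ x y, (P x y).IsPath) :
    (∃ v : Fin n ≃ V, ∀ e ∈ T.edgeSet,
        (∑ i : Fin (n - 1),
          if e ∈ (P (v ⟨i.val, by have := i.isLt; omega⟩)
              (v ⟨i.val + 1, by have := i.isLt; omega⟩)).edges then 1 else 0) ≤ c e) ↔
    (∃ s t : V, ∀ e ∈ T.edgeSet, c e = 1 → e ∈ (P s t).edges) := by
  classical
  constructor
  · rintro ⟨v, hv⟩
    refine ⟨v ⟨0, by omega⟩, v ⟨n - 1, by omega⟩, ?_⟩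
    intro e he hce
    revert he hce
    induction e using Sym2.ind with
    | _ a b =>
    intro he hce
    rw [SimpleGraph.mem_edgeSet] at he
    obtain ⟨σ, hσab, hσ⟩ := exists_side hT he
    set g : ℕ → Bool := fun k => if h : k < n then σ (v ⟨k, h⟩) else false with hgdef
    have hgk : ∀ (k : ℕ) (hk : k < n), g k = σ (v ⟨k, hk⟩) := fun k hk => dif_pos hk
    have eq1 : (∑ i : Fin (n - 1),
        if s(a, b) ∈ (P (v ⟨i.val, by have := i.isLt; omega⟩)
            (v ⟨i.val + 1, by have := i.isLt; omega⟩)).edges then (1 : ℕ) else 0)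
        = ∑ k ∈ Finset.range (n - 1), (if g k = g (k + 1) then 0 else 1) := by
      rw [← Fin.sum_univ_eq_sum_range (fun k => if g k = g (k + 1) then 0 else 1) (n - 1)]
      apply Finset.sum_congr rfl
      intro i _
      have hi : i.val < n := by have := i.isLt; omega
      have hi1 : i.val + 1 < n := by have := i.isLt; omega
      rw [hgk i.val hi, hgk (i.val + 1) hi1]
      have hiff : s(a, b) ∈ (P (v ⟨i.val, hi⟩) (v ⟨i.val + 1, hi1⟩)).edges
          ↔ σ (v ⟨i.val, hi⟩) ≠ σ (v ⟨i.val + 1, hi1⟩) := by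
        rw [edge_mem_path_iff hT.2 (hP _ _)]
        exact hσ _ _
      by_cases hxy : σ (v ⟨i.val, hi⟩) = σ (v ⟨i.val + 1, hi1⟩)
      · rw [if_neg (fun hmem => (hiff.mp hmem) hxy), if_pos hxy]
      · rw [if_pos (hiff.mpr hxy), if_neg hxy]
    have hS : (∑ k ∈ Finset.range (n - 1), (if g k = g (k + 1) then 0 else 1)) ≤ 1 := by
      have h2 := hv s(a, b) (by rwa [SimpleGraph.mem_edgeSet])
      rw [hce] at h2
      rw [← eq1]
      exact h2
    have hgab : ∃ i j : ℕ, i ≤ j ∧ j < n ∧ g i ≠ g j := by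
      have hga : g (v.symm a).val = σ a := by
        rw [hgk (v.symm a).val (v.symm a).isLt]
        congr 1
        rw [Fin.eta]
        exact v.apply_symm_apply a
      have hgb : g (v.symm b).val = σ b := by
        rw [hgk (v.symm b).val (v.symm b).isLt]
        congr 1
        rw [Fin.eta]
        exact v.apply_symm_apply b
      rcases le_total (v.symm a).val (v.symm b).val with h | h
      · exact ⟨_, _, h, (v.symm b).isLt, by rw [hga, hgb]; exact hσab⟩
      · exact ⟨_, _, h, (v.symm a).isLt, by rw [hgb, hga]; exact fun hq => hσab hq.symm⟩
    obtain ⟨i, j, hij, hjn, hgij⟩ := hgab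
    have hmain : g 0 ≠ g (n - 1) := by
      have h1 := flips_lower g i j hij hgij
      have e1 : (∑ k ∈ Finset.Ico 0 i, (if g k = g (k + 1) then 0 else 1))
          + (∑ k ∈ Finset.Ico i j, (if g k = g (k + 1) then 0 else 1))
          = ∑ k ∈ Finset.Ico 0 j, (if g k = g (k + 1) then 0 else 1) :=
        Finset.sum_Ico_consecutive _ (Nat.zero_le i) hij
      have e2 : (∑ k ∈ Finset.Ico 0 j, (if g k = g (k + 1) then 0 else 1))
          + (∑ k ∈ Finset.Ico j (n - 1), (if g k = g (k + 1) then 0 else 1))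
          = ∑ k ∈ Finset.Ico 0 (n - 1), (if g k = g (k + 1) then 0 else 1) :=
        Finset.sum_Ico_consecutive _ (Nat.zero_le j) (by omega)
      have hrange : (∑ k ∈ Finset.range (n - 1), (if g k = g (k + 1) then 0 else 1))
          = ∑ k ∈ Finset.Ico 0 (n - 1), (if g k = g (k + 1) then 0 else 1) := by
        rw [Finset.range_eq_Ico]
      have hz : g 0 = g i := by
        by_contra h0
        have := flips_lower g 0 i (Nat.zero_le i) h0
        omega
      have hl : g j = g (n - 1) := by
        by_contra h0
        have := flips_lower g j (n - 1) (by omega) h0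
        omega
      exact fun hq => hgij (hz.symm.trans (hq.trans hl.symm))
    rw [hgk 0 (by omega), hgk (n - 1) (by omega)] at hmain
    rw [edge_mem_path_iff hT.2 (hP _ _)]
    exact (hσ _ _).mpr hmain
  · rintro ⟨s, t, hcov⟩
    by_cases hn1 : n = 1
    · subst hn1
      refine ⟨(Fintype.equivFinOfCardEq hcard).symm, ?_⟩
      intro e he
      simp
    · have hn2 : 2 ≤ n := by omega
      by_cases hstq : s = t
      · subst hstq
        have hcap : ∀ a b : V, T.Adj a b → 2 ≤ c s(a, b) := by
          intro a b hab
          have he : s(a, b) ∈ T.edgeSet := by rwa [SimpleGraph.mem_edgeSet]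
          have h1 := hc _ he
          rcases Nat.lt_or_ge (c s(a, b)) 2 with h | h
          · have hce : c s(a, b) = 1 := by omega
            have hmem := hcov _ he hce
            have hnil : P s s = SimpleGraph.Walk.nil :=
              (SimpleGraph.Walk.isPath_iff_eq_nil (p := P s s)).mp (hP s s)
            rw [hnil] at hmem
            simp at hmem
          · exact h
        obtain ⟨s₀, t₀, hs0⟩ := Fintype.exists_pair_of_one_lt_card (α := V) (by rw [hcard]; omega)
        obtain ⟨L, hnd, hcompl, hh, hl, hload⟩ :=
          lemE n V T hT hcard s₀ t₀ (fun h => absurd h hs0)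
        obtain ⟨v, hvsum⟩ := final_sum hT n hn hcard P hP hnd hcompl
        refine ⟨v, ?_⟩
        intro e he
        revert he
        induction e using Sym2.ind with
        | _ a b =>
        intro he
        rw [SimpleGraph.mem_edgeSet] at he
        obtain ⟨σ, hσab, hσ⟩ := exists_side hT he
        refine le_trans (le_of_eq (hvsum a b he σ hσ)) ?_
        exact le_trans (hload a b he σ hσ) (hcap a b he)
      · obtain ⟨L, hnd, hcompl, hh, hl, hload⟩ :=
          lemE n V T hT hcard s t (fun h => absurd h hstq)
        obtain ⟨v, hvsum⟩ := final_sum hT n hn hcard P hP hnd hcompl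
        refine ⟨v, ?_⟩
        intro e he
        revert he
        induction e using Sym2.ind with
        | _ a b =>
        intro he
        rw [SimpleGraph.mem_edgeSet] at he
        obtain ⟨σ, hσab, hσ⟩ := exists_side hT he
        refine le_trans (le_of_eq (hvsum a b he σ hσ)) ?_
        have hload2 := hload a b he σ hσ
        by_cases hce : c s(a, b) = 1
        · have hmem := hcov s(a, b) (by rwa [SimpleGraph.mem_edgeSet]) hce
          have hsep : σ s ≠ σ t :=
            (hσ s t).mp ((edge_mem_path_iff hT.2 (hP s t) _).mp hmem)
          have hpar := loadB_parity σ L s t hh hl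
          rw [if_neg hsep] at hpar
          omega
        · have := hc s(a, b) (by rwa [SimpleGraph.mem_edgeSet])
          omega
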